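/- Decay of the kernel H_α: let α > 0 and for x ∈ ℝ and y ∈ ℝ with y ≠ 0 define H(x,y) := ∫_ℝ sgn(ξ)·(1+|ξ|^α)^{−1/2}·exp(i x ξ − |ξ|·(1+|ξ|^α)^{1/2}·|y|) dξ (the integral converges absolutely for y ≠ 0). Then there exists a constant C > 0, depending only on α, such that |H(x,y)| ≤ C/(x² + y²)^{1/2} for all x ∈ ℝ and all y ≠ 0. -/

import Mathlib

open MeasureTheory

noncomputable section

/-- The kernel `H(x,y) = ∫_ℝ sgn(ξ) (1+|ξ|^α)^{-1/2} e^{ixξ - |ξ|(1+|ξ|^α)^{1/2}|y|} dξ`,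
defined for `y ≠ 0` (the integral converges absolutely there). -/
def Hker (α x y : ℝ) : ℂ :=
  ∫ ξ : ℝ, ((Real.sign ξ * (1 + |ξ| ^ α) ^ (-((1 : ℝ) / 2)) : ℝ) : ℂ)
    * Complex.exp (Complex.I * ((x * ξ : ℝ) : ℂ)
        - ((|ξ| * (1 + |ξ| ^ α) ^ ((1 : ℝ) / 2) * |y| : ℝ) : ℂ))

open Set Filter

namespace HkerAux

def phiK (α b ξ : ℝ) : ℝ :=
  (1 + ξ ^ α) ^ (-(1/2) : ℝ) * Real.exp (-(ξ * (1 + ξ ^ α) ^ ((1/2) : ℝ) * b))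

def phiD (α b ξ : ℝ) : ℝ :=
  ((α * ξ ^ (α-1)) * (-(1/2)) * (1 + ξ ^ α) ^ ((-(1/2) : ℝ) - 1)) *
      Real.exp (-(ξ * (1 + ξ ^ α) ^ ((1/2) : ℝ) * b))
  + (1 + ξ ^ α) ^ (-(1/2) : ℝ) *
      (Real.exp (-(ξ * (1 + ξ ^ α) ^ ((1/2) : ℝ) * b)) *
        (-((1 * (1 + ξ ^ α) ^ ((1/2) : ℝ)
            + ξ * ((α * ξ ^ (α-1)) * (1/2) * (1 + ξ ^ α) ^ (((1/2) : ℝ) - 1))) * b)))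

lemma w_pos {α ξ : ℝ} (hξ : 0 ≤ ξ) : 0 < 1 + ξ ^ α :=
  lt_of_lt_of_le one_pos (le_add_of_nonneg_right (Real.rpow_nonneg hξ _))

lemma hasDerivAt_phiK {α b ξ : ℝ} (hξ : 0 < ξ) :
    HasDerivAt (phiK α b) (phiD α b ξ) ξ := by
  have hw : (0:ℝ) < 1 + ξ ^ α := w_pos hξ.le
  have h2 : HasDerivAt (fun s : ℝ => 1 + s ^ α) (α * ξ ^ (α-1)) ξ :=
    (Real.hasDerivAt_rpow_const (Or.inl hξ.ne')).const_add 1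
  have hu : HasDerivAt (fun s : ℝ => (1 + s ^ α) ^ (-(1/2) : ℝ))
      ((α * ξ ^ (α-1)) * (-(1/2)) * (1 + ξ ^ α) ^ ((-(1/2) : ℝ) - 1)) ξ :=
    h2.rpow_const (Or.inl hw.ne')
  have hp : HasDerivAt (fun s : ℝ => (1 + s ^ α) ^ ((1/2) : ℝ))
      ((α * ξ ^ (α-1)) * (1/2) * (1 + ξ ^ α) ^ (((1/2) : ℝ) - 1)) ξ :=
    h2.rpow_const (Or.inl hw.ne')
  have hm : HasDerivAt (fun s : ℝ => s * (1 + s ^ α) ^ ((1/2) : ℝ))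
      (1 * (1 + ξ ^ α) ^ ((1/2) : ℝ)
        + ξ * ((α * ξ ^ (α-1)) * (1/2) * (1 + ξ ^ α) ^ (((1/2) : ℝ) - 1))) ξ :=
    (hasDerivAt_id' (x := ξ)).mul hp
  have hv := (((hm.mul_const b).neg).exp)
  exact hu.mul hv

lemma phiD_nonpos {α b ξ : ℝ} (hα : 0 < α) (hb : 0 ≤ b) (hξ : 0 < ξ) :
    phiD α b ξ ≤ 0 := by
  have hw : (0:ℝ) < 1 + ξ ^ α := w_pos hξ.le
  have h1 : 0 ≤ α * ξ ^ (α-1) := mul_nonneg hα.le (Real.rpow_nonneg hξ.le _)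
  have h2 : (0:ℝ) < (1 + ξ ^ α) ^ ((-(1/2) : ℝ) - 1) := Real.rpow_pos_of_pos hw _
  have h3 : (0:ℝ) < (1 + ξ ^ α) ^ ((1/2) : ℝ) := Real.rpow_pos_of_pos hw _
  have h4 : (0:ℝ) < (1 + ξ ^ α) ^ (((1/2) : ℝ) - 1) := Real.rpow_pos_of_pos hw _
  have h5 : (0:ℝ) < (1 + ξ ^ α) ^ (-(1/2) : ℝ) := Real.rpow_pos_of_pos hw _
  have hE : (0:ℝ) < Real.exp (-(ξ * (1 + ξ ^ α) ^ ((1/2) : ℝ) * b)) := Real.exp_pos _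
  have hA : ((α * ξ ^ (α-1)) * (-(1/2)) * (1 + ξ ^ α) ^ ((-(1/2) : ℝ) - 1)) *
      Real.exp (-(ξ * (1 + ξ ^ α) ^ ((1/2) : ℝ) * b)) ≤ 0 := by
    have : ((α * ξ ^ (α-1)) * (-(1/2)) * (1 + ξ ^ α) ^ ((-(1/2) : ℝ) - 1)) *
        Real.exp (-(ξ * (1 + ξ ^ α) ^ ((1/2) : ℝ) * b))
        = -((α * ξ ^ (α-1)) * (1/2) * ((1 + ξ ^ α) ^ ((-(1/2) : ℝ) - 1) *
          Real.exp (-(ξ * (1 + ξ ^ α) ^ ((1/2) : ℝ) * b)))) := by ring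
    rw [this, neg_nonpos]
    exact mul_nonneg (mul_nonneg h1 (by norm_num)) (mul_nonneg h2.le hE.le)
  have hB : (1 + ξ ^ α) ^ (-(1/2) : ℝ) *
      (Real.exp (-(ξ * (1 + ξ ^ α) ^ ((1/2) : ℝ) * b)) *
        (-((1 * (1 + ξ ^ α) ^ ((1/2) : ℝ)
            + ξ * ((α * ξ ^ (α-1)) * (1/2) * (1 + ξ ^ α) ^ (((1/2) : ℝ) - 1))) * b))) ≤ 0 := by
    apply mul_nonpos_of_nonneg_of_nonpos h5.le
    apply mul_nonpos_of_nonneg_of_nonpos hE.le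
    rw [neg_nonpos]
    apply mul_nonneg _ hb
    apply add_nonneg (by positivity)
    exact mul_nonneg hξ.le (mul_nonneg (mul_nonneg h1 (by norm_num)) h4.le)
  exact add_nonpos hA hB

lemma continuousOn_phiD {α b : ℝ} (hα : 0 < α) :
    ContinuousOn (phiD α b) (Ioi 0) := by
  have hw : ContinuousOn (fun ξ : ℝ => 1 + ξ ^ α) (Ioi 0) :=
    continuousOn_const.add (continuousOn_id.rpow_const fun x hx => Or.inl (ne_of_gt hx))
  have hwne : ∀ x ∈ Ioi (0:ℝ), 1 + x ^ α ≠ 0 ∨ (0:ℝ) ≤ (-(1/2) : ℝ) - 1 :=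
    fun x hx => Or.inl (w_pos (le_of_lt hx)).ne'
  have hd : ContinuousOn (fun ξ : ℝ => α * ξ ^ (α-1)) (Ioi 0) :=
    continuousOn_const.mul (continuousOn_id.rpow_const fun x hx => Or.inl (ne_of_gt hx))
  have hE : ContinuousOn
      (fun ξ : ℝ => Real.exp (-(ξ * (1 + ξ ^ α) ^ ((1/2) : ℝ) * b))) (Ioi 0) := by
    apply Real.continuous_exp.comp_continuousOn
    exact (((continuousOn_id.mul (hw.rpow_const fun x hx =>
      Or.inl (w_pos (le_of_lt hx)).ne')).mul continuousOn_const)).neg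
  unfold phiD
  exact ((hd.mul continuousOn_const).mul (hw.rpow_const fun x hx =>
      Or.inl (w_pos (le_of_lt hx)).ne')).mul hE |>.add <|
    (hw.rpow_const fun x hx => Or.inl (w_pos (le_of_lt hx)).ne').mul <|
      hE.mul <| ContinuousOn.neg <| ContinuousOn.mul
        (((continuousOn_const.mul (hw.rpow_const fun x hx =>
            Or.inl (w_pos (le_of_lt hx)).ne')).add
          (continuousOn_id.mul ((hd.mul continuousOn_const).mul
            (hw.rpow_const fun x hx => Or.inl (w_pos (le_of_lt hx)).ne')))))
        continuousOn_const

lemma continuousOn_phiK {α b : ℝ} (hα : 0 < α) :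
    ContinuousOn (phiK α b) (Ioi 0) := by
  have hw : ContinuousOn (fun ξ : ℝ => 1 + ξ ^ α) (Ioi 0) :=
    continuousOn_const.add (continuousOn_id.rpow_const fun x hx => Or.inl (ne_of_gt hx))
  exact (hw.rpow_const fun x hx => Or.inl (w_pos (le_of_lt hx)).ne').mul <|
    Real.continuous_exp.comp_continuousOn <|
      (((continuousOn_id.mul (hw.rpow_const fun x hx =>
        Or.inl (w_pos (le_of_lt hx)).ne')).mul continuousOn_const)).neg

lemma phiK_pos {α b ξ : ℝ} (hξ : 0 ≤ ξ) : 0 < phiK α b ξ :=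
  mul_pos (Real.rpow_pos_of_pos (w_pos hξ) _) (Real.exp_pos _)

lemma phiK_le_exp {α b ξ : ℝ} (hb : 0 ≤ b) (hξ : 0 ≤ ξ) :
    phiK α b ξ ≤ Real.exp (-(b * ξ)) := by
  have hw : (0:ℝ) < 1 + ξ ^ α := w_pos hξ
  have h1 : (1 + ξ ^ α) ^ (-(1/2) : ℝ) ≤ 1 :=
    Real.rpow_le_one_of_one_le_of_nonpos
      (le_add_of_nonneg_right (Real.rpow_nonneg hξ _)) (by norm_num)
  have h2 : Real.exp (-(ξ * (1 + ξ ^ α) ^ ((1/2) : ℝ) * b)) ≤ Real.exp (-(b * ξ)) := by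
    apply Real.exp_le_exp.mpr
    have hg : (1:ℝ) ≤ (1 + ξ ^ α) ^ ((1/2) : ℝ) :=
      Real.one_le_rpow (le_add_of_nonneg_right (Real.rpow_nonneg hξ _)) (by norm_num)
    nlinarith [mul_le_mul_of_nonneg_left hg (mul_nonneg hξ hb)]
  calc phiK α b ξ ≤ 1 * Real.exp (-(ξ * (1 + ξ ^ α) ^ ((1/2) : ℝ) * b)) :=
        mul_le_mul_of_nonneg_right h1 (Real.exp_pos _).le
    _ ≤ Real.exp (-(b * ξ)) := by rw [one_mul]; exact h2

lemma phiK_le_one {α b ξ : ℝ} (hb : 0 ≤ b) (hξ : 0 ≤ ξ) : phiK α b ξ ≤ 1 :=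
  (phiK_le_exp hb hξ).trans (Real.exp_le_one_iff.mpr (neg_nonpos.mpr (mul_nonneg hb hξ)))


lemma ftc_phiD {α b ε R : ℝ} (hα : 0 < α) (hε : 0 < ε) (hεR : ε ≤ R) :
    ∫ t in ε..R, phiD α b t = phiK α b R - phiK α b ε := by
  have hsub : Set.uIcc ε R ⊆ Ioi (0:ℝ) := by
    rw [Set.uIcc_of_le hεR]
    exact fun t ht => lt_of_lt_of_le hε ht.1
  exact intervalIntegral.integral_eq_sub_of_hasDerivAt
    (fun t ht => hasDerivAt_phiK (hsub ht))
    (((continuousOn_phiD hα).mono hsub).intervalIntegrable)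

lemma interval_bound {α b x ε R : ℝ} (hα : 0 < α) (hb : 0 ≤ b) (hx : x ≠ 0)
    (hε : 0 < ε) (hεR : ε ≤ R) :
    |∫ t in ε..R, phiK α b t * Real.sin (x * t)| ≤ 2 / |x| := by
  have hxa : (0:ℝ) < |x| := abs_pos.mpr hx
  have hsub : Set.uIcc ε R ⊆ Ioi (0:ℝ) := by
    rw [Set.uIcc_of_le hεR]
    exact fun t ht => lt_of_lt_of_le hε ht.1
  set v : ℝ → ℝ := fun t => -Real.cos (x * t) / x with hv_def
  have hv : ∀ t : ℝ, HasDerivAt v (Real.sin (x * t)) t := by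
    intro t
    have h1 : HasDerivAt (fun t : ℝ => x * t) x t := by
      simpa using (hasDerivAt_id t).const_mul x
    have h2 : HasDerivAt (fun t : ℝ => Real.cos (x * t)) (-Real.sin (x * t) * x) t :=
      (Real.hasDerivAt_cos (x * t)).comp t h1
    have h3 := (h2.neg).div_const x
    have h4 : -(-Real.sin (x * t) * x) / x = Real.sin (x * t) := by
      rw [neg_mul, neg_neg, mul_div_cancel_right₀ _ hx]
    exact h4 ▸ h3
  have hvb : ∀ t : ℝ, |v t| ≤ 1 / |x| := by
    intro t
    rw [hv_def]
    simp only [abs_div, abs_neg]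
    gcongr
    exact Real.abs_cos_le_one _
  have hvcont : Continuous v := by
    apply Continuous.div_const
    exact (Real.continuous_cos.comp (continuous_const.mul continuous_id)).neg
  have hintD : IntervalIntegrable (phiD α b) volume ε R :=
    ((continuousOn_phiD hα).mono hsub).intervalIntegrable
  have hIBP := intervalIntegral.integral_mul_deriv_eq_deriv_mul
    (u := phiK α b) (v := v) (u' := phiD α b) (v' := fun t => Real.sin (x * t))
    (fun t ht => hasDerivAt_phiK (hsub ht)) (fun t _ => hv t)
    hintD
    ((Real.continuous_sin.comp (continuous_const.mul continuous_id)).intervalIntegrable ε R)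
  have habs : |∫ t in ε..R, phiD α b t * v t| ≤ (phiK α b ε - phiK α b R) / |x| := by
    have hintDV : IntervalIntegrable (fun t => phiD α b t * v t) volume ε R :=
      (((continuousOn_phiD hα).mono hsub).mul hvcont.continuousOn).intervalIntegrable
    calc |∫ t in ε..R, phiD α b t * v t| ≤ ∫ t in ε..R, |phiD α b t * v t| := by
          have h := intervalIntegral.norm_integral_le_integral_norm
            (f := fun t => phiD α b t * v t) (μ := volume) hεR
          simp only [Real.norm_eq_abs] at h
          exact h
      _ ≤ ∫ t in ε..R, -phiD α b t / |x| := by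
          apply intervalIntegral.integral_mono_on hεR hintDV.abs
            ((hintD.neg).div_const _)
          intro t ht
          have htpos : 0 < t := lt_of_lt_of_le hε ht.1
          have hDn : phiD α b t ≤ 0 := phiD_nonpos hα hb htpos
          rw [abs_mul, abs_of_nonpos hDn, div_eq_mul_inv, ← one_div]
          exact mul_le_mul_of_nonneg_left (hvb t) (neg_nonneg.mpr hDn)
      _ = (phiK α b ε - phiK α b R) / |x| := by
          rw [intervalIntegral.integral_div, intervalIntegral.integral_neg,
            ftc_phiD hα hε hεR]
          ring
  rw [hIBP]
  have hKR : 0 < phiK α b R := phiK_pos (le_trans hε.le hεR)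
  have hKe : 0 < phiK α b ε := phiK_pos hε.le
  have h1 : |phiK α b R * v R| ≤ phiK α b R / |x| := by
    rw [abs_mul, abs_of_pos hKR, div_eq_mul_inv, ← one_div]
    exact mul_le_mul_of_nonneg_left (hvb R) hKR.le
  have h2 : |phiK α b ε * v ε| ≤ phiK α b ε / |x| := by
    rw [abs_mul, abs_of_pos hKe, div_eq_mul_inv, ← one_div]
    exact mul_le_mul_of_nonneg_left (hvb ε) hKe.le
  have hKe1 : phiK α b ε ≤ 1 := phiK_le_one hb hε.le
  calc |phiK α b R * v R - phiK α b ε * v ε - ∫ t in ε..R, phiD α b t * v t|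
      ≤ |phiK α b R * v R - phiK α b ε * v ε| + |∫ t in ε..R, phiD α b t * v t| :=
        abs_sub _ _
    _ ≤ (|phiK α b R * v R| + |phiK α b ε * v ε|) + |∫ t in ε..R, phiD α b t * v t| := by
        gcongr
        exact abs_sub _ _
    _ ≤ (phiK α b R / |x| + phiK α b ε / |x|) + (phiK α b ε - phiK α b R) / |x| := by
        gcongr
    _ = 2 * phiK α b ε / |x| := by ring
    _ ≤ 2 / |x| := by
        gcongr
        linarith


lemma integrableOn_phiK_sin {α b x : ℝ} (hα : 0 < α) (hb : 0 < b) :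
    IntegrableOn (fun ξ => phiK α b ξ * Real.sin (x * ξ)) (Ioi 0) := by
  apply Integrable.mono (exp_neg_integrableOn_Ioi 0 hb)
  · exact ((continuousOn_phiK hα).mul
      ((Real.continuous_sin.comp (continuous_const.mul continuous_id)).continuousOn)).aestronglyMeasurable
      measurableSet_Ioi
  · filter_upwards [ae_restrict_mem measurableSet_Ioi] with ξ hξ
    have hξ0 : (0:ℝ) < ξ := hξ
    rw [Real.norm_eq_abs, Real.norm_eq_abs, abs_mul,
      abs_of_pos (phiK_pos (α := α) (b := b) hξ0.le), abs_of_pos (Real.exp_pos _)]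
    calc phiK α b ξ * |Real.sin (x * ξ)| ≤ phiK α b ξ * 1 :=
          mul_le_mul_of_nonneg_left (Real.abs_sin_le_one _) (phiK_pos hξ0.le).le
      _ ≤ Real.exp (-b * ξ) := by
          rw [mul_one, neg_mul]; exact phiK_le_exp hb.le hξ0.le

lemma abs_integral_Ioi_le_inv_b {α b x : ℝ} (hα : 0 < α) (hb : 0 < b) :
    |∫ ξ in Ioi (0:ℝ), phiK α b ξ * Real.sin (x * ξ)| ≤ 1 / b := by
  have hint := integrableOn_phiK_sin (x := x) hα hb
  calc |∫ ξ in Ioi (0:ℝ), phiK α b ξ * Real.sin (x * ξ)|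
      ≤ ∫ ξ in Ioi (0:ℝ), ‖phiK α b ξ * Real.sin (x * ξ)‖ :=
        by
          simpa [Real.norm_eq_abs] using
            norm_integral_le_integral_norm (μ := volume.restrict (Ioi 0))
              (fun ξ : ℝ => phiK α b ξ * Real.sin (x * ξ))
    _ ≤ ∫ ξ in Ioi (0:ℝ), Real.exp (-b * ξ) := by
        apply setIntegral_mono_on hint.norm (exp_neg_integrableOn_Ioi 0 hb)
          measurableSet_Ioi
        intro ξ hξ
        have hξ0 : (0:ℝ) < ξ := hξ
        rw [Real.norm_eq_abs, abs_mul, abs_of_pos (phiK_pos (α := α) (b := b) hξ0.le)]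
        calc phiK α b ξ * |Real.sin (x * ξ)| ≤ phiK α b ξ * 1 :=
              mul_le_mul_of_nonneg_left (Real.abs_sin_le_one _) (phiK_pos hξ0.le).le
          _ ≤ Real.exp (-b * ξ) := by
              rw [mul_one, neg_mul]; exact phiK_le_exp hb.le hξ0.le
    _ = 1 / b := by
        have h := integral_comp_mul_left_Ioi (fun u : ℝ => Real.exp (-u)) 0 hb
        simp only [neg_mul, mul_zero] at h ⊢
        rw [h, integral_exp_neg_Ioi_zero, smul_eq_mul, mul_one, one_div]

lemma abs_integral_Ioi_le_two_div_x {α b x : ℝ} (hα : 0 < α) (hb : 0 < b) (hx : x ≠ 0) :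
    |∫ ξ in Ioi (0:ℝ), phiK α b ξ * Real.sin (x * ξ)| ≤ 2 / |x| := by
  set s : ℕ → Set ℝ := fun n => Ioo ((n + 1 : ℝ))⁻¹ ((n : ℝ) + 1) with hs_def
  have hsm : ∀ n, MeasurableSet (s n) := fun n => measurableSet_Ioo
  have hmono : Monotone s := by
    intro m n hmn
    apply Ioo_subset_Ioo
    · apply inv_anti₀ (by positivity)
      exact add_le_add_left (Nat.cast_le.mpr hmn) 1
    · exact add_le_add_left (Nat.cast_le.mpr hmn) 1
  have hunion : (⋃ n, s n) = Ioi (0:ℝ) := by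
    ext t
    simp only [hs_def, mem_iUnion, mem_Ioo, mem_Ioi]
    constructor
    · rintro ⟨n, h1, h2⟩
      exact lt_trans (by positivity) h1
    · intro ht
      obtain ⟨n, hn⟩ := exists_nat_gt (max t⁻¹ t)
      refine ⟨n, ?_, ?_⟩
      · have h1 : t⁻¹ < (n : ℝ) + 1 :=
          lt_trans (lt_of_le_of_lt (le_max_left _ _) hn) (lt_add_one _)
        exact inv_lt_of_inv_lt₀ ht h1
      · exact lt_trans (lt_of_le_of_lt (le_max_right _ _) hn) (lt_add_one _)
  have hint := integrableOn_phiK_sin (x := x) hα hb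
  have htend := tendsto_setIntegral_of_monotone hsm hmono (hunion ▸ hint)
  rw [hunion] at htend
  have habs := htend.abs
  apply le_of_tendsto habs
  filter_upwards with n
  have hord : ((n + 1 : ℝ))⁻¹ ≤ (n : ℝ) + 1 := by
    have h1 : (1:ℝ) ≤ (n:ℝ) + 1 := le_add_of_nonneg_left (Nat.cast_nonneg n)
    calc ((n + 1 : ℝ))⁻¹ ≤ 1 := by
          rw [inv_le_one_iff₀]; right; exact h1
      _ ≤ (n : ℝ) + 1 := h1
  have heq : ∫ ξ in s n, phiK α b ξ * Real.sin (x * ξ)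
      = ∫ t in ((n + 1 : ℝ))⁻¹..((n : ℝ) + 1), phiK α b t * Real.sin (x * t) := by
    rw [intervalIntegral.integral_of_le hord, integral_Ioc_eq_integral_Ioo]
  rw [heq]
  exact interval_bound hα hb.le hx (by positivity) hord


lemma measurable_sign : Measurable Real.sign := by
  have h : Real.sign = fun r : ℝ => if r < 0 then (-1:ℝ) else if 0 < r then 1 else 0 :=
    funext fun r => rfl
  rw [h]
  exact Measurable.ite measurableSet_Iio measurable_const
    (Measurable.ite measurableSet_Ioi measurable_const measurable_const)

lemma exp_I_sub_exp_I_neg (s : ℝ) :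
    Complex.exp (Complex.I * (s:ℂ)) - Complex.exp (Complex.I * ((-s : ℝ):ℂ))
      = 2 * Complex.I * ((Real.sin s : ℝ):ℂ) := by
  push_cast
  rw [mul_comm Complex.I (s:ℂ), mul_comm Complex.I (-(s:ℂ)), Complex.exp_mul_I,
    Complex.exp_mul_I, Complex.cos_neg, Complex.sin_neg]
  ring

end HkerAux


open HkerAux

lemma norm_F_le {α x y : ℝ} (hα : 0 < α) (ξ : ℝ) :
    ‖((Real.sign ξ * (1 + |ξ| ^ α) ^ (-((1 : ℝ) / 2)) : ℝ) : ℂ)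
      * Complex.exp (Complex.I * ((x * ξ : ℝ) : ℂ)
          - ((|ξ| * (1 + |ξ| ^ α) ^ ((1 : ℝ) / 2) * |y| : ℝ) : ℂ))‖
      ≤ Real.exp (-(|y| * |ξ|)) := by
  have habs : ‖((Real.sign ξ * (1 + |ξ| ^ α) ^ (-((1 : ℝ) / 2)) : ℝ) : ℂ)
      * Complex.exp (Complex.I * ((x * ξ : ℝ) : ℂ)
          - ((|ξ| * (1 + |ξ| ^ α) ^ ((1 : ℝ) / 2) * |y| : ℝ) : ℂ))‖
      = |Real.sign ξ * (1 + |ξ| ^ α) ^ (-((1 : ℝ) / 2))|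
        * Real.exp (-(|ξ| * (1 + |ξ| ^ α) ^ ((1 : ℝ) / 2) * |y|)) := by
    simp only [norm_mul, Complex.norm_real, Real.norm_eq_abs, Complex.norm_exp,
      Complex.sub_re, Complex.mul_re, Complex.I_re, Complex.I_im, Complex.ofReal_re,
      Complex.ofReal_im]
    norm_num
  rw [habs]
  have hsg : |Real.sign ξ| ≤ 1 := by
    rcases Real.sign_apply_eq ξ with h | h | h <;> rw [h] <;> norm_num
  have hupos : (0:ℝ) < (1 + |ξ| ^ α) ^ (-((1 : ℝ) / 2)) :=
    Real.rpow_pos_of_pos (w_pos (abs_nonneg ξ)) _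
  have h1 : |Real.sign ξ * (1 + |ξ| ^ α) ^ (-((1 : ℝ) / 2))|
      ≤ (1 + |ξ| ^ α) ^ (-((1 : ℝ) / 2)) := by
    rw [abs_mul, abs_of_pos hupos]
    nlinarith [abs_nonneg (Real.sign ξ)]
  calc |Real.sign ξ * (1 + |ξ| ^ α) ^ (-((1 : ℝ) / 2))|
        * Real.exp (-(|ξ| * (1 + |ξ| ^ α) ^ ((1 : ℝ) / 2) * |y|))
      ≤ (1 + |ξ| ^ α) ^ (-((1 : ℝ) / 2))
        * Real.exp (-(|ξ| * (1 + |ξ| ^ α) ^ ((1 : ℝ) / 2) * |y|)) :=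
        mul_le_mul_of_nonneg_right h1 (Real.exp_pos _).le
    _ = phiK α |y| |ξ| := rfl
    _ ≤ Real.exp (-(|y| * |ξ|)) := phiK_le_exp (abs_nonneg y) (abs_nonneg ξ)

lemma measurable_F {α x y : ℝ} (hα : 0 < α) :
    Measurable (fun ξ : ℝ => ((Real.sign ξ * (1 + |ξ| ^ α) ^ (-((1 : ℝ) / 2)) : ℝ) : ℂ)
      * Complex.exp (Complex.I * ((x * ξ : ℝ) : ℂ)
          - ((|ξ| * (1 + |ξ| ^ α) ^ ((1 : ℝ) / 2) * |y| : ℝ) : ℂ))) := by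
  have hwcont : Continuous fun ξ : ℝ => 1 + |ξ| ^ α :=
    continuous_const.add (continuous_abs.rpow_const fun z => Or.inr hα.le)
  have hm1 : Measurable fun ξ : ℝ => Real.sign ξ * (1 + |ξ| ^ α) ^ (-((1 : ℝ) / 2)) :=
    measurable_sign.mul
      ((hwcont.rpow_const fun z => Or.inl (w_pos (abs_nonneg z)).ne').measurable)
  have hm2 : Continuous fun ξ : ℝ => Complex.exp (Complex.I * ((x * ξ : ℝ) : ℂ)
      - ((|ξ| * (1 + |ξ| ^ α) ^ ((1 : ℝ) / 2) * |y| : ℝ) : ℂ)) := by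
    apply Complex.continuous_exp.comp
    apply Continuous.sub
    · exact continuous_const.mul
        (Complex.continuous_ofReal.comp (continuous_const.mul continuous_id))
    · exact Complex.continuous_ofReal.comp
        ((continuous_abs.mul
          (hwcont.rpow_const fun z => Or.inl (w_pos (abs_nonneg z)).ne')).mul
            continuous_const)
  exact (Complex.measurable_ofReal.comp hm1).mul hm2.measurable

lemma integrable_exp_neg_abs {b : ℝ} (hb : 0 < b) :
    Integrable (fun ξ : ℝ => Real.exp (-(b * |ξ|))) := by
  rw [← integrableOn_univ, ← Iio_union_Ici (a := (0:ℝ)), integrableOn_union,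
    integrableOn_Ici_iff_integrableOn_Ioi]
  have hIoi : IntegrableOn (fun ξ : ℝ => Real.exp (-(b * |ξ|))) (Ioi 0) := by
    apply IntegrableOn.congr_fun (exp_neg_integrableOn_Ioi 0 hb) _ measurableSet_Ioi
    intro ξ hξ
    simp only
    rw [abs_of_pos hξ, neg_mul]
  constructor
  · rw [← (Measure.measurePreserving_neg (volume : Measure ℝ)).integrableOn_comp_preimage
        measurableEmbedding_neg]
    simp only [Function.comp_def, neg_preimage, neg_Iio, neg_zero, abs_neg]
    exact hIoi
  · exact hIoi

lemma Hker_eq {α x y : ℝ} (hα : 0 < α) (hy : y ≠ 0) :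
    Hker α x y = 2 * Complex.I *
      (((∫ ξ in Ioi (0:ℝ), phiK α |y| ξ * Real.sin (x * ξ)) : ℝ) : ℂ) := by
  have hb : 0 < |y| := abs_pos.mpr hy
  set F : ℝ → ℂ := fun ξ =>
    ((Real.sign ξ * (1 + |ξ| ^ α) ^ (-((1 : ℝ) / 2)) : ℝ) : ℂ)
      * Complex.exp (Complex.I * ((x * ξ : ℝ) : ℂ)
          - ((|ξ| * (1 + |ξ| ^ α) ^ ((1 : ℝ) / 2) * |y| : ℝ) : ℂ)) with hF_def
  have hF_int : Integrable F :=
    (integrable_exp_neg_abs hb).mono' (measurable_F hα).aestronglyMeasurable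
      (Filter.Eventually.of_forall fun ξ => norm_F_le (x := x) (y := y) hα ξ)
  have hFneg_int : IntegrableOn (fun ξ => F (-ξ)) (Ioi 0) := by
    apply Integrable.mono' ((integrable_exp_neg_abs hb).integrableOn (s := Ioi 0))
    · exact ((measurable_F hα).comp measurable_neg).aestronglyMeasurable
    · filter_upwards with ξ
      exact le_of_le_of_eq (norm_F_le (x := x) (y := y) hα (-ξ)) (by rw [abs_neg])
  have hH : Hker α x y = ∫ ξ : ℝ, F ξ := rfl
  have hsplit : (∫ ξ : ℝ, F ξ) = (∫ ξ in Iic (0:ℝ), F ξ) + ∫ ξ in Ioi (0:ℝ), F ξ :=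
    (intervalIntegral.integral_Iic_add_Ioi hF_int.integrableOn hF_int.integrableOn).symm
  have hneg : (∫ ξ in Iic (0:ℝ), F ξ) = ∫ ξ in Ioi (0:ℝ), F (-ξ) := by
    have := integral_comp_neg_Ioi (0:ℝ) F
    rw [neg_zero] at this
    exact this.symm
  have hadd : (∫ ξ in Ioi (0:ℝ), F (-ξ)) + (∫ ξ in Ioi (0:ℝ), F ξ)
      = ∫ ξ in Ioi (0:ℝ), (F (-ξ) + F ξ) :=
    (integral_add hFneg_int hF_int.integrableOn).symm
  have hptwise : ∀ ξ ∈ Ioi (0:ℝ), F (-ξ) + F ξ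
      = 2 * Complex.I * ((phiK α |y| ξ * Real.sin (x * ξ) : ℝ) : ℂ) := by
    intro ξ hξ
    have hξ0 : (0:ℝ) < ξ := hξ
    rw [hF_def]
    dsimp only
    rw [abs_neg, abs_of_pos hξ0, Real.sign_of_pos hξ0,
      Real.sign_of_neg (neg_lt_zero.mpr hξ0), one_mul]
    have hexp : ∀ t : ℝ, Complex.exp (Complex.I * ((t : ℝ) : ℂ)
        - ((ξ * (1 + ξ ^ α) ^ ((1 : ℝ) / 2) * |y| : ℝ) : ℂ))
        = Complex.exp (Complex.I * (t:ℂ))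
          * ((Real.exp (-(ξ * (1 + ξ ^ α) ^ ((1 : ℝ) / 2) * |y|)) : ℝ) : ℂ) := by
      intro t
      rw [sub_eq_add_neg, Complex.exp_add, ← Complex.ofReal_neg, ← Complex.ofReal_exp]
    rw [hexp (x * -ξ), hexp (x * ξ)]
    have hxneg : ((x * -ξ : ℝ) : ℂ) = ((-(x * ξ) : ℝ) : ℂ) := by norm_cast; ring
    rw [hxneg]
    have hkey := exp_I_sub_exp_I_neg (x * ξ)
    unfold phiK
    simp only [Complex.ofReal_mul, Complex.ofReal_neg, Complex.ofReal_one] at hkey ⊢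
    linear_combination ((((1 + ξ ^ α) ^ (-((1 : ℝ) / 2)) : ℝ) : ℂ) *
      ((Real.exp (-(ξ * (1 + ξ ^ α) ^ ((1 : ℝ) / 2) * |y|)) : ℝ) : ℂ)) * hkey
  rw [hH, hsplit, hneg, hadd, setIntegral_congr_fun measurableSet_Ioi hptwise,
    integral_const_mul]
  congr 1
  exact integral_ofReal


/-- **Decay of the kernel `H_α`** (Lemma 3.8 (b)): for `α > 0` there is `C > 0`, depending
only on `α`, with `|H(x,y)| ≤ C/(x²+y²)^{1/2}` for all `x ∈ ℝ` and `y ≠ 0`. -/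
theorem Hker_linear_decay (α : ℝ) (hα : 0 < α) :
    ∃ C : ℝ, 0 < C ∧ ∀ x y : ℝ, y ≠ 0 →
      ‖Hker α x y‖ ≤ C / (x ^ 2 + y ^ 2) ^ ((1 : ℝ) / 2) := by
  refine ⟨8, by norm_num, ?_⟩
  intro x y hy
  have hb : 0 < |y| := abs_pos.mpr hy
  set A := ∫ ξ in Ioi (0:ℝ), phiK α |y| ξ * Real.sin (x * ξ) with hA_def
  have hHn : ‖Hker α x y‖ = 2 * |A| := by
    rw [Hker_eq hα hy, norm_mul, norm_mul]
    simp [hA_def]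
  have hxy : (0:ℝ) < x ^ 2 + y ^ 2 := by
    nlinarith [abs_pos.mpr hy, sq_abs y, sq_nonneg x, abs_nonneg y]
  have hsqrt_pos : 0 < Real.sqrt (x ^ 2 + y ^ 2) := Real.sqrt_pos.mpr hxy
  have hrw : (x ^ 2 + y ^ 2) ^ ((1:ℝ)/2) = Real.sqrt (x ^ 2 + y ^ 2) :=
    (Real.sqrt_eq_rpow _).symm
  rw [hHn, hrw]
  rcases le_or_gt |x| |y| with hcase | hcase
  · have h1 : |A| ≤ 1 / |y| := abs_integral_Ioi_le_inv_b hα hb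
    have hle : Real.sqrt (x ^ 2 + y ^ 2) ≤ 2 * |y| := by
      rw [show (2:ℝ) * |y| = Real.sqrt ((2 * |y|) ^ 2) from
        (Real.sqrt_sq (by positivity)).symm]
      apply Real.sqrt_le_sqrt
      nlinarith [sq_abs x, sq_abs y, abs_nonneg x, abs_nonneg y]
    calc 2 * |A| ≤ 2 * (1 / |y|) := by nlinarith
      _ ≤ 8 / Real.sqrt (x ^ 2 + y ^ 2) := by
          rw [mul_one_div, div_le_div_iff₀ hb hsqrt_pos]
          nlinarith
  · have hx : x ≠ 0 := by
      intro h
      rw [h, abs_zero] at hcase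
      exact absurd hcase (not_lt.mpr (abs_nonneg y))
    have hxa : 0 < |x| := abs_pos.mpr hx
    have h1 : |A| ≤ 2 / |x| := abs_integral_Ioi_le_two_div_x hα hb hx
    have hle : Real.sqrt (x ^ 2 + y ^ 2) ≤ 2 * |x| := by
      rw [show (2:ℝ) * |x| = Real.sqrt ((2 * |x|) ^ 2) from
        (Real.sqrt_sq (by positivity)).symm]
      apply Real.sqrt_le_sqrt
      nlinarith [sq_abs x, sq_abs y, abs_nonneg x, abs_nonneg y]
    calc 2 * |A| ≤ 2 * (2 / |x|) := by nlinarith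
      _ ≤ 8 / Real.sqrt (x ^ 2 + y ^ 2) := by
          rw [show (2:ℝ) * (2 / |x|) = 4 / |x| by ring, div_le_div_iff₀ hxa hsqrt_pos]
          nlinarith
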